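/- For positive definite matrices X, Y, Z, W of the same size, the geometric mean of harmonic means is dominated by the harmonic mean of geometric means: (X ! Y) # (Z ! W) ≤ (X # Z) ! (Y # W), where A ! B = 2(A⁻¹ + B⁻¹)⁻¹ is the harmonic mean and A # B = A^{1/2}(A^{-1/2} B A^{-1/2})^{1/2} A^{1/2} is the geometric mean. -/

import Mathlib

set_option linter.unusedSectionVars false
set_option maxHeartbeats 1000000

open scoped ComplexOrder Kronecker

/-- Matrix power via the continuous functional calculus. -/
noncomputable def mpow {n : Type*} [Fintype n] [DecidableEq n]
    (A : Matrix n n ℂ) (p : ℝ) : Matrix n n ℂ :=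
  cfc (fun x : ℝ => x ^ p) A

/-- The Loewner order on matrices. -/
def LoewnerLE {n : Type*} [Fintype n] (A B : Matrix n n ℂ) : Prop :=
  (B - A).PosSemidef

/-- The matrix geometric mean `A # B = A^{1/2}(A^{-1/2} B A^{-1/2})^{1/2} A^{1/2}`. -/
noncomputable def geo {n : Type*} [Fintype n] [DecidableEq n]
    (A B : Matrix n n ℂ) : Matrix n n ℂ :=
  mpow A (1/2) * mpow (mpow A (-(1/2)) * B * mpow A (-(1/2))) (1/2) * mpow A (1/2)

/-- The generalized Kantorovich constant. -/
noncomputable def Kconst (h p : ℝ) : ℝ :=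
  ((h ^ p - h) / ((p - 1) * (h - 1))) *
    (((p - 1) / p) * ((h ^ p - 1) / (h ^ p - h))) ^ p

/-- The Specht ratio. -/
noncomputable def Specht (h : ℝ) : ℝ :=
  if h = 1 then 1 else (h - 1) * h ^ (1 / (h - 1)) / (Real.exp 1 * Real.log h)

/-- The harmonic mean `A ! B = 2 (A⁻¹ + B⁻¹)⁻¹`. -/
noncomputable def harm {n : Type*} [Fintype n] [DecidableEq n]
    (A B : Matrix n n ℂ) : Matrix n n ℂ :=
  (2 : ℝ) • (A⁻¹ + B⁻¹)⁻¹

namespace GeoHarmAux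

open Matrix

variable {n : Type*} [Fintype n] [DecidableEq n]

/-! ### smul lemmas -/

lemma posSemidef_smul {c : ℝ} (hc : 0 ≤ c) {A : Matrix n n ℂ} (hA : A.PosSemidef) :
    ((c : ℝ) • A).PosSemidef := by
  refine Matrix.PosSemidef.of_dotProduct_mulVec_nonneg ?_ ?_
  · show ((c:ℝ) • A)ᴴ = _
    rw [Matrix.conjTranspose_smul, star_trivial, hA.1.eq]
  · intro x
    have h := hA.dotProduct_mulVec_nonneg x
    have : star x ⬝ᵥ ((c : ℝ) • A) *ᵥ x = (c : ℂ) * (star x ⬝ᵥ A *ᵥ x) := by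
      rw [Matrix.smul_mulVec, dotProduct_smul]
      simp [RCLike.real_smul_eq_coe_mul]
    rw [this]
    exact mul_nonneg (by exact_mod_cast Complex.zero_le_real.2 hc) h

lemma posDef_smul {c : ℝ} (hc : 0 < c) {A : Matrix n n ℂ} (hA : A.PosDef) :
    ((c : ℝ) • A).PosDef := by
  refine Matrix.PosDef.of_dotProduct_mulVec_pos ?_ ?_
  · show ((c:ℝ) • A)ᴴ = _
    rw [Matrix.conjTranspose_smul, star_trivial, hA.1.eq]
  · intro x hx
    have h := hA.dotProduct_mulVec_pos hx
    have : star x ⬝ᵥ ((c : ℝ) • A) *ᵥ x = (c : ℂ) * (star x ⬝ᵥ A *ᵥ x) := by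
      rw [Matrix.smul_mulVec, dotProduct_smul]
      simp [RCLike.real_smul_eq_coe_mul]
    rw [this]
    exact mul_pos (by exact_mod_cast Complex.zero_lt_real.2 hc) h

/-! ### conjugation lemmas -/

lemma posDef_conjT {B M : Matrix n n ℂ} (hB : B.PosDef) (hM : IsUnit M) :
    (Mᴴ * B * M).PosDef := by
  refine Matrix.PosDef.of_dotProduct_mulVec_pos ?_ ?_
  · have := hB.1
    rw [Matrix.IsHermitian] at this ⊢
    simp only [Matrix.conjTranspose_mul, Matrix.conjTranspose_conjTranspose, this,
      Matrix.mul_assoc]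
  · intro x hx
    have hMx : M *ᵥ x ≠ 0 := by
      intro h0
      apply hx
      have : M⁻¹ *ᵥ (M *ᵥ x) = x := by
        rw [Matrix.mulVec_mulVec, Matrix.nonsing_inv_mul _ ((Matrix.isUnit_iff_isUnit_det _).1 hM)]
        simp
      rw [h0, Matrix.mulVec_zero] at this
      exact this.symm
    have key : star x ⬝ᵥ (Mᴴ * B * M) *ᵥ x = star (M *ᵥ x) ⬝ᵥ B *ᵥ (M *ᵥ x) := by
      rw [Matrix.star_mulVec]
      simp only [Matrix.dotProduct_mulVec, Matrix.vecMul_vecMul, Matrix.mul_assoc]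
    rw [key]
    exact hB.dotProduct_mulVec_pos hMx

lemma posDef_conj {B M : Matrix n n ℂ} (hB : B.PosDef) (hM : IsUnit M) :
    (M * B * Mᴴ).PosDef := by
  have h := posDef_conjT hB (M := Mᴴ) (by
    rw [Matrix.isUnit_iff_isUnit_det, Matrix.det_conjTranspose, isUnit_star]
    exact (Matrix.isUnit_iff_isUnit_det _).1 hM)
  rwa [Matrix.conjTranspose_conjTranspose] at h

/-! ### mpow lemmas -/

lemma spec_pos {A : Matrix n n ℂ} (hA : A.PosDef) : ∀ x ∈ spectrum ℝ A, 0 < x := by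
  rw [hA.1.spectrum_real_eq_range_eigenvalues]
  rintro x ⟨i, rfl⟩
  exact hA.eigenvalues_pos i

lemma mpow_isHermitian {A : Matrix n n ℂ} (p : ℝ) : (mpow A p).IsHermitian := by
  have h : IsSelfAdjoint (mpow A p) := cfc_predicate _ _
  exact h

lemma mpow_add {A : Matrix n n ℂ} (hA : A.PosDef) (p q : ℝ) :
    mpow A p * mpow A q = mpow A (p + q) := by
  have hsp := spec_pos hA
  have hc : ∀ r : ℝ, ContinuousOn (fun x : ℝ => x ^ r) (spectrum ℝ A) := fun r x hx =>
    (Real.continuousAt_rpow_const x r (Or.inl (hsp x hx).ne')).continuousWithinAt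
  rw [mpow, mpow, mpow, ← cfc_mul _ _ A (hc p) (hc q)]
  exact cfc_congr fun x hx => (Real.rpow_add (hsp x hx) p q).symm

lemma mpow_zero {A : Matrix n n ℂ} (hA : A.PosDef) : mpow A 0 = 1 := by
  rw [mpow]
  have h1 : cfc (fun x : ℝ => x ^ (0:ℝ)) A = cfc (fun _ : ℝ => (1:ℝ)) A :=
    cfc_congr fun x _ => Real.rpow_zero x
  rw [h1]
  exact cfc_const_one ℝ A (show IsSelfAdjoint A from hA.1)

lemma mpow_one {A : Matrix n n ℂ} (hA : A.PosDef) : mpow A 1 = A := by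
  rw [mpow]
  have h1 : cfc (fun x : ℝ => x ^ (1:ℝ)) A = cfc (fun x : ℝ => x) A :=
    cfc_congr fun x _ => Real.rpow_one x
  rw [h1]
  exact cfc_id' ℝ A (show IsSelfAdjoint A from hA.1)

lemma mpow_mul_neg {A : Matrix n n ℂ} (hA : A.PosDef) (p : ℝ) :
    mpow A p * mpow A (-p) = 1 := by
  rw [mpow_add hA, add_neg_cancel, mpow_zero hA]

lemma mpow_isUnit {A : Matrix n n ℂ} (hA : A.PosDef) (p : ℝ) : IsUnit (mpow A p) :=
  (Matrix.isUnit_iff_isUnit_det _).2 (Matrix.isUnit_det_of_right_inverse (mpow_mul_neg hA p))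

lemma mpow_posDef {A : Matrix n n ℂ} (hA : A.PosDef) (p : ℝ) : (mpow A p).PosDef := by
  have h2 : mpow A p = (mpow A (p/2))ᴴ * 1 * (mpow A (p/2)) := by
    rw [(mpow_isHermitian (p/2)).eq, Matrix.mul_one, mpow_add hA]
    norm_num
  rw [h2]
  exact posDef_conjT Matrix.PosDef.one (mpow_isUnit hA _)

lemma mpow_half_mul_half {A : Matrix n n ℂ} (hA : A.PosDef) :
    mpow A (1/2) * mpow A (1/2) = A := by
  rw [mpow_add hA]; norm_num; exact mpow_one hA

lemma mpow_neg_half_sq {A : Matrix n n ℂ} (hA : A.PosDef) :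
    mpow A (-(1/2)) * mpow A (-(1/2)) = A⁻¹ := by
  have h1 : mpow A (-(1/2)) * mpow A (-(1/2)) = mpow A (-1) := by
    rw [mpow_add hA]; norm_num
  have h2 : A * mpow A (-1) = 1 := by
    nth_rewrite 1 [← mpow_one hA]
    rw [mpow_add hA]
    norm_num
    exact mpow_zero hA
  rw [h1, Matrix.inv_eq_right_inv h2]

lemma mpow_half_mul_neg_half {A : Matrix n n ℂ} (hA : A.PosDef) :
    mpow A (1/2) * mpow A (-(1/2)) = 1 := mpow_mul_neg hA _

lemma mpow_neg_half_mul_half {A : Matrix n n ℂ} (hA : A.PosDef) :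
    mpow A (-(1/2)) * mpow A (1/2) = 1 := by
  have := mpow_mul_neg hA (-(1/2)); rwa [neg_neg] at this

lemma posDef_isUnit_det {A : Matrix n n ℂ} (hA : A.PosDef) : IsUnit A.det :=
  isUnit_iff_ne_zero.2 hA.det_pos.ne'

lemma posDef_inv_inv {A : Matrix n n ℂ} (hA : A.PosDef) : A⁻¹⁻¹ = A :=
  Matrix.nonsing_inv_nonsing_inv _ (posDef_isUnit_det hA)

lemma conj_posDef {A B : Matrix n n ℂ} (hA : A.PosDef) (hB : B.PosDef) :
    (mpow A (-(1/2)) * B * mpow A (-(1/2))).PosDef := by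
  have h := posDef_conj hB (mpow_isUnit hA (-(1/2)))
  rwa [(mpow_isHermitian (-(1/2))).eq] at h

lemma geo_def (A B : Matrix n n ℂ) :
    geo A B = mpow A (1/2) * mpow (mpow A (-(1/2)) * B * mpow A (-(1/2))) (1/2) * mpow A (1/2) :=
  rfl

/-! ### geo lemmas -/

lemma geo_posDef {A B : Matrix n n ℂ} (hA : A.PosDef) (hB : B.PosDef) :
    (geo A B).PosDef := by
  have hC := conj_posDef hA hB
  rw [geo_def]
  nth_rewrite 2 [← (mpow_isHermitian (A := A) (1/2)).eq]
  exact posDef_conj (mpow_posDef hC _) (mpow_isUnit hA _)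

lemma riccati {A B : Matrix n n ℂ} (hA : A.PosDef) (hB : B.PosDef) :
    geo A B * A⁻¹ * geo A B = B := by
  have hC := conj_posDef hA hB
  rw [geo_def]
  set R' := mpow A (-(1/2)) with hR'def
  set R := mpow A (1/2) with hRdef
  set C := R' * B * R' with hCdef
  set S := mpow C (1/2) with hSdef
  have h4 : R * R' = 1 := mpow_half_mul_neg_half hA
  have h3 : R' * R = 1 := mpow_neg_half_mul_half hA
  have h1 : ∀ x : Matrix n n ℂ, R * (R' * x) = x := fun x => by
    rw [← Matrix.mul_assoc, h4, Matrix.one_mul]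
  have h2 : ∀ x : Matrix n n ℂ, R' * (R * x) = x := fun x => by
    rw [← Matrix.mul_assoc, h3, Matrix.one_mul]
  have hSS : ∀ x : Matrix n n ℂ, S * (S * x) = R' * (B * (R' * x)) := fun x => by
    rw [← Matrix.mul_assoc, mpow_half_mul_half hC, hCdef]
    simp only [Matrix.mul_assoc]
  have hAinv : A⁻¹ = R' * R' := (mpow_neg_half_sq hA).symm
  rw [hAinv]
  simp only [Matrix.mul_assoc, h1, h2, hSS, h3, h4, Matrix.mul_one, Matrix.one_mul]

lemma riccati_unique {A B G : Matrix n n ℂ} (hA : A.PosDef) (hB : B.PosDef)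
    (hG : G.PosDef) (h : G * A⁻¹ * G = B) : G = geo A B := by
  have hC := conj_posDef hA hB
  rw [geo_def]
  set R' := mpow A (-(1/2)) with hR'def
  set R := mpow A (1/2) with hRdef
  set C := R' * B * R' with hCdef
  have h4 : R * R' = 1 := mpow_half_mul_neg_half hA
  have h3 : R' * R = 1 := mpow_neg_half_mul_half hA
  have h1 : ∀ x : Matrix n n ℂ, R * (R' * x) = x := fun x => by
    rw [← Matrix.mul_assoc, h4, Matrix.one_mul]
  have h2 : ∀ x : Matrix n n ℂ, R' * (R * x) = x := fun x => by
    rw [← Matrix.mul_assoc, h3, Matrix.one_mul]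
  have hT : (R' * G * R').PosDef := by
    have hh := posDef_conj hG (mpow_isUnit hA (-(1/2)))
    rwa [(mpow_isHermitian (-(1/2))).eq] at hh
  have hAinv : A⁻¹ = R' * R' := (mpow_neg_half_sq hA).symm
  have hTT : (R' * G * R') * (R' * G * R') = C := by
    rw [hCdef, ← h, hAinv]
    simp only [Matrix.mul_assoc]
  have key : R' * G * R' = mpow C (1/2) :=
    open scoped MatrixOrder in (CFC.sq_eq_sq_iff _ _ hT.posSemidef.nonneg
      (mpow_posDef hC _).posSemidef.nonneg).1
      (by rw [pow_two, pow_two, hTT, mpow_half_mul_half hC])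
  rw [← key]
  simp only [Matrix.mul_assoc, h1, h2, h3, Matrix.mul_one]

lemma geo_inv {A B : Matrix n n ℂ} (hA : A.PosDef) (hB : B.PosDef) :
    (geo A B)⁻¹ = geo A⁻¹ B⁻¹ := by
  have hG := geo_posDef hA hB
  refine riccati_unique hA.inv hB.inv hG.inv ?_
  rw [posDef_inv_inv hA]
  have h := congrArg Inv.inv (riccati hA hB)
  rw [Matrix.mul_inv_rev, Matrix.mul_inv_rev, posDef_inv_inv hA] at h
  simpa [Matrix.mul_assoc] using h

lemma geo_smul {c : ℝ} (hc : 0 < c) {A B : Matrix n n ℂ} (hA : A.PosDef) (hB : B.PosDef) :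
    geo (c • A) (c • B) = c • geo A B := by
  have hG := geo_posDef hA hB
  refine (riccati_unique (posDef_smul hc hA) (posDef_smul hc hB) (posDef_smul hc hG) ?_).symm
  have hinv : ((c : ℝ) • A)⁻¹ = (c⁻¹ : ℝ) • A⁻¹ := by
    apply Matrix.inv_eq_left_inv
    rw [Matrix.smul_mul, Matrix.mul_smul, smul_smul, inv_mul_cancel₀ hc.ne', one_smul,
      Matrix.nonsing_inv_mul _ (posDef_isUnit_det hA)]
  rw [hinv]
  simp only [Matrix.smul_mul, Matrix.mul_smul, smul_smul]
  have hr := riccati hA hB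
  simp only [Matrix.mul_assoc] at hr ⊢
  rw [hr]
  congr 1
  field_simp

/-! ### the order lemmas -/

lemma sqrt_compare {T Q : Matrix n n ℂ} (hT : T.IsHermitian) (hQ : Q.PosSemidef)
    (h : (Q * Q - T * T).PosSemidef) : (Q - T).PosSemidef := by
  have hD : (Q - T).IsHermitian := hQ.1.sub hT
  apply hD.posSemidef_iff_eigenvalues_nonneg.mpr
  intro i
  by_contra hneg
  push_neg at hneg
  set μ : ℝ := hD.eigenvalues i with hμ
  set v : n → ℂ := ⇑(hD.eigenvectorBasis i) with hv
  have hv0 : v ≠ 0 := by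
    intro h0
    have h1 : ‖hD.eigenvectorBasis i‖ = 1 := hD.eigenvectorBasis.orthonormal.1 i
    have h2 : hD.eigenvectorBasis i = 0 := (WithLp.equiv 2 _).injective (by simpa [hv] using h0)
    rw [h2, norm_zero] at h1
    exact one_ne_zero h1.symm
  have hDv : (Q - T) *ᵥ v = (μ : ℂ) • v := by
    rw [hD.mulVec_eigenvectorBasis i]
    ext j
    simp only [Pi.smul_apply, Complex.real_smul, smul_eq_mul]
    rfl
  set q := star v ⬝ᵥ Q *ᵥ v with hq'
  set s := star v ⬝ᵥ v with hs'
  have hq : 0 ≤ q := hQ.dotProduct_mulVec_nonneg v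
  have hs : 0 < s := Matrix.dotProduct_star_self_pos_iff.2 hv0
  have e3 : star v ⬝ᵥ (Q - T) *ᵥ v = (μ : ℂ) * s := by
    rw [hDv, dotProduct_smul, smul_eq_mul]
  have e1 : star v ⬝ᵥ (Q * (Q - T)) *ᵥ v = (μ : ℂ) * q := by
    rw [← Matrix.mulVec_mulVec, hDv, Matrix.mulVec_smul, dotProduct_smul, smul_eq_mul]
  have e2 : star v ⬝ᵥ ((Q - T) * T) *ᵥ v = (μ : ℂ) * (star v ⬝ᵥ T *ᵥ v) := by
    rw [← Matrix.mulVec_mulVec, Matrix.dotProduct_mulVec]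
    have hvm : star v ᵥ* (Q - T) = (μ : ℂ) • star v := by
      conv_lhs => rw [← hD.eq]
      rw [← Matrix.star_mulVec, hDv, star_smul]
      simp [Complex.conj_ofReal]
    rw [hvm, smul_dotProduct, smul_eq_mul]
  have et : star v ⬝ᵥ T *ᵥ v = q - (μ : ℂ) * s := by
    have hqt : star v ⬝ᵥ (Q - T) *ᵥ v = q - star v ⬝ᵥ T *ᵥ v := by
      rw [Matrix.sub_mulVec, dotProduct_sub]
    rw [hqt] at e3
    linear_combination -e3
  have hsum : (0:ℂ) ≤ (μ : ℂ) * q + (μ : ℂ) * (q - (μ : ℂ) * s) := by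
    have hid : Q * Q - T * T = Q * (Q - T) + (Q - T) * T := by noncomm_ring
    have h0 := h.dotProduct_mulVec_nonneg v
    rw [hid, Matrix.add_mulVec, dotProduct_add, e1, e2, et] at h0
    exact h0
  have hqre : 0 ≤ q.re ∧ q.im = 0 := by
    rw [Complex.le_def] at hq
    exact ⟨hq.1, hq.2.symm⟩
  have hsre : 0 < s.re ∧ s.im = 0 := by
    rw [Complex.lt_def] at hs
    exact ⟨hs.1, hs.2.symm⟩
  rw [Complex.le_def] at hsum
  have hre := hsum.1
  simp only [Complex.add_re, Complex.mul_re, Complex.ofReal_re, Complex.ofReal_im,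
    Complex.sub_re, Complex.sub_im, Complex.zero_re, Complex.mul_im, hqre.2, hsre.2] at hre
  nlinarith [hre, mul_nonneg (le_of_lt (neg_pos.2 hneg)) hqre.1,
    mul_pos (mul_pos (neg_pos.2 hneg) (neg_pos.2 hneg)) hsre.1]

lemma le_geo {A B S : Matrix n n ℂ} (hA : A.PosDef) (hB : B.PosDef) (hS : S.IsHermitian)
    (h : (B - S * A⁻¹ * S).PosSemidef) : (geo A B - S).PosSemidef := by
  have hC := conj_posDef hA hB
  have hR : (mpow A (1/2)).PosDef := mpow_posDef hA _
  have hR' : (mpow A (-(1/2))).PosDef := mpow_posDef hA _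
  rw [geo_def]
  set R' := mpow A (-(1/2)) with hR'def
  set R := mpow A (1/2) with hRdef
  set C := R' * B * R' with hCdef
  set Q := mpow C (1/2) with hQdef
  have hQ : Q.PosDef := mpow_posDef hC _
  have hQQ : Q * Q = C := mpow_half_mul_half hC
  set T := R' * S * R' with hTdef
  have h4 : R * R' = 1 := mpow_half_mul_neg_half hA
  have h3 : R' * R = 1 := mpow_neg_half_mul_half hA
  have h1 : ∀ x : Matrix n n ℂ, R * (R' * x) = x := fun x => by
    rw [← Matrix.mul_assoc, h4, Matrix.one_mul]
  have hT : T.IsHermitian := by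
    rw [hTdef]
    show (R' * S * R')ᴴ = R' * S * R'
    simp [Matrix.conjTranspose_mul, hR'.1.eq, hS.eq, Matrix.mul_assoc]
  have hAinv : R' * R' = A⁻¹ := mpow_neg_half_sq hA
  have key : (Q * Q - T * T).PosSemidef := by
    have e : Q * Q - T * T = R'ᴴ * (B - S * A⁻¹ * S) * R' := by
      rw [hR'.1.eq, hQQ, hCdef, hTdef, Matrix.mul_sub, Matrix.sub_mul, ← hAinv]
      simp only [Matrix.mul_assoc]
    rw [e]
    exact h.conjTranspose_mul_mul_same R'
  have hQT := sqrt_compare hT hQ.posSemidef key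
  have e2 : R * Q * R - S = R * (Q - T) * Rᴴ := by
    rw [hR.1.eq, Matrix.mul_sub, Matrix.sub_mul]
    congr 1
    rw [hTdef]
    simp only [Matrix.mul_assoc, h1]
    rw [h3, Matrix.mul_one]
  rw [e2]
  exact hQT.mul_mul_conjTranspose_same R

lemma block_psd {A B : Matrix n n ℂ} (hA : A.PosDef) (hB : B.PosDef) :
    (fromBlocks A (geo A B) (geo A B) B).PosSemidef := by
  haveI := Matrix.invertibleOfIsUnitDet A (posDef_isUnit_det hA)
  have hGH : (geo A B)ᴴ = geo A B := (geo_posDef hA hB).1.eq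
  rw [show fromBlocks A (geo A B) (geo A B) B = fromBlocks A (geo A B) (geo A B)ᴴ B by
    rw [hGH]]
  rw [Matrix.PosDef.fromBlocks₁₁ _ _ hA]
  have h0 : B - (geo A B)ᴴ * A⁻¹ * geo A B = 0 := by
    rw [hGH, riccati hA hB, sub_self]
  rw [h0]
  exact Matrix.PosSemidef.zero

lemma geo_concave {A₁ B₁ A₂ B₂ : Matrix n n ℂ} (hA₁ : A₁.PosDef) (hB₁ : B₁.PosDef)
    (hA₂ : A₂.PosDef) (hB₂ : B₂.PosDef) :
    (geo (A₁ + A₂) (B₁ + B₂) - (geo A₁ B₁ + geo A₂ B₂)).PosSemidef := by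
  have h1 := block_psd hA₁ hB₁
  have h2 := block_psd hA₂ hB₂
  have hsum := h1.add h2
  rw [Matrix.fromBlocks_add] at hsum
  have hA : (A₁ + A₂).PosDef := hA₁.add hA₂
  haveI := Matrix.invertibleOfIsUnitDet _ (posDef_isUnit_det hA)
  have hSH : (geo A₁ B₁ + geo A₂ B₂)ᴴ = geo A₁ B₁ + geo A₂ B₂ :=
    ((geo_posDef hA₁ hB₁).1.add (geo_posDef hA₂ hB₂).1).eq
  rw [show fromBlocks (A₁ + A₂) (geo A₁ B₁ + geo A₂ B₂) (geo A₁ B₁ + geo A₂ B₂) (B₁ + B₂)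
      = fromBlocks (A₁ + A₂) (geo A₁ B₁ + geo A₂ B₂) (geo A₁ B₁ + geo A₂ B₂)ᴴ (B₁ + B₂) by
    rw [hSH]] at hsum
  have h3 := (Matrix.PosDef.fromBlocks₁₁ _ _ hA).1 hsum
  rw [hSH] at h3
  exact le_geo hA (hB₁.add hB₂) hSH h3

lemma inv_antitone {A B : Matrix n n ℂ} (hA : A.PosDef) (hB : B.PosDef)
    (h : (B - A).PosSemidef) : (A⁻¹ - B⁻¹).PosSemidef := by
  haveI := Matrix.invertibleOfIsUnitDet B (posDef_isUnit_det hB)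
  haveI := Matrix.invertibleOfIsUnitDet (A⁻¹) (posDef_isUnit_det hA.inv)
  have h1 : (fromBlocks B (1 : Matrix n n ℂ) ((1 : Matrix n n ℂ))ᴴ A⁻¹).PosSemidef := by
    rw [Matrix.PosDef.fromBlocks₂₂ _ _ hA.inv, posDef_inv_inv hA]
    simpa using h
  have h2 := (Matrix.PosDef.fromBlocks₁₁ _ _ hB).1 h1
  simpa using h2

end GeoHarmAux

theorem geo_harm_le_harm_geo {n : Type*} [Fintype n] [DecidableEq n]
    (X Y Z W : Matrix n n ℂ)
    (hX : X.PosDef) (hY : Y.PosDef) (hZ : Z.PosDef) (hW : W.PosDef) :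
    LoewnerLE (geo (harm X Y) (harm Z W)) (harm (geo X Z) (geo Y W)) := by
  open GeoHarmAux Matrix in
  have hP : (X⁻¹ + Y⁻¹).PosDef := hX.inv.add hY.inv
  have hQ : (Z⁻¹ + W⁻¹).PosDef := hZ.inv.add hW.inv
  have hG : (geo (X⁻¹ + Y⁻¹) (Z⁻¹ + W⁻¹)).PosDef := geo_posDef hP hQ
  have hXZ : (geo X Z).PosDef := geo_posDef hX hZ
  have hYW : (geo Y W).PosDef := geo_posDef hY hW
  have hK : ((geo X Z)⁻¹ + (geo Y W)⁻¹).PosDef := hXZ.inv.add hYW.inv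
  -- rewrite the LHS
  have hlhs : geo (harm X Y) (harm Z W)
      = (2 : ℝ) • (geo (X⁻¹ + Y⁻¹) (Z⁻¹ + W⁻¹))⁻¹ := by
    show geo ((2:ℝ) • (X⁻¹ + Y⁻¹)⁻¹) ((2:ℝ) • (Z⁻¹ + W⁻¹)⁻¹) = _
    rw [geo_smul (by norm_num) hP.inv hQ.inv, ← geo_inv hP hQ]
  have hcon := geo_concave hX.inv hZ.inv hY.inv hW.inv
  rw [← geo_inv hX hZ, ← geo_inv hY hW] at hcon
  have hmono := inv_antitone hK hG hcon
  have hfinal := posSemidef_smul (by norm_num : (0:ℝ) ≤ 2) hmono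
  rw [smul_sub] at hfinal
  show (harm (geo X Z) (geo Y W) - geo (harm X Y) (harm Z W)).PosSemidef
  rw [hlhs]
  exact hfinal
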